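/- If an algebraic curvature tensor R on a tangent space satisfies R = ν R₀ where R₀ is the quaternionic space-form curvature tensor (22), and additionally R(X, Y)ξ ∈ span{ξ, J₁ξ, J₂ξ, J₃ξ} for all X, Y, where ξ is a nonzero null vector, then ν = 0 (hence R = 0). -/

import Mathlib

set_option maxHeartbeats 1000000


/-- If `R = ν R₀` with `R₀` the quaternionic space-form curvature
tensor (22), and `R(X,Y)ξ ∈ span{ξ, J₁ξ, J₂ξ, J₃ξ}` for all `X, Y`, where `ξ` is a
nonzero null vector, then `ν = 0` (hence `R = 0`).  The condition
`ν R₀(X,Y)ξ ∈ span{ξ, Jₐξ}` is expressed, via the nondegenerate pairing `g`, as: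
the functional `W ↦ ν R₀(X,Y,ξ,W)` equals `g(aξ + bJ₁ξ + cJ₂ξ + dJ₃ξ, ·)`. -/
theorem stmt19 (V : Type*) [AddCommGroup V] [Module ℝ V] [FiniteDimensional ℝ V]
    (n : ℕ) (hn : 2 ≤ n) (hdim : Module.finrank ℝ V = 4 * n)
    (ε₁ ε₂ ε₃ : ℝ)
    (hε : (ε₁ = -1 ∧ ε₂ = -1 ∧ ε₃ = -1) ∨ (ε₁ = -1 ∧ ε₂ = 1 ∧ ε₃ = 1))
    (g : LinearMap.BilinForm ℝ V)
    (hsymm : ∀ x y : V, g x y = g y x)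
    (hnd : ∀ x : V, (∀ y : V, g x y = 0) → x = 0)
    (J₁ J₂ J₃ : V →ₗ[ℝ] V)
    (hJ1 : ∀ x : V, J₁ (J₁ x) = ε₁ • x)
    (hJ2 : ∀ x : V, J₂ (J₂ x) = ε₂ • x)
    (hJ3 : ∀ x : V, J₃ (J₃ x) = ε₃ • x)
    (hJ12 : ∀ x : V, J₁ (J₂ x) = J₃ x)
    (hskew1 : ∀ x y : V, g (J₁ x) y + g x (J₁ y) = 0)
    (hskew2 : ∀ x y : V, g (J₂ x) y + g x (J₂ y) = 0)
    (hskew3 : ∀ x y : V, g (J₃ x) y + g x (J₃ y) = 0)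
    (ξ : V) (hξ : ξ ≠ 0) (hnull : g ξ ξ = 0)
    (R₀form : V → V → V → V → ℝ)
    (hR₀ : ∀ X Y Z W : V, R₀form X Y Z W =
      g X Z * g Y W - g Y Z * g X W
      - (ε₁ * (g (J₁ X) Z * g (J₁ Y) W - g (J₁ Y) Z * g (J₁ X) W
            + 2 * g X (J₁ Y) * g Z (J₁ W))
        + ε₂ * (g (J₂ X) Z * g (J₂ Y) W - g (J₂ Y) Z * g (J₂ X) W
            + 2 * g X (J₂ Y) * g Z (J₂ W))
        + ε₃ * (g (J₃ X) Z * g (J₃ Y) W - g (J₃ Y) Z * g (J₃ X) W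
            + 2 * g X (J₃ Y) * g Z (J₃ W))))
    (ν : ℝ)
    (hspan : ∀ X Y : V, ∃ a b c d : ℝ, ∀ W : V,
      ν * R₀form X Y ξ W = g (a • ξ + b • J₁ ξ + c • J₂ ξ + d • J₃ ξ) W) :
    ν = 0 := by
  by_contra hν
  have he1 : ε₁ = -1 := by rcases hε with ⟨h,_,_⟩|⟨h,_,_⟩ <;> exact h
  have he3 : ε₃ = ε₂ := by rcases hε with ⟨_,h2,h3⟩|⟨_,h2,h3⟩ <;> rw [h2,h3]
  have he2 : ε₂ * ε₂ = 1 := by rcases hε with ⟨_,h2,_⟩|⟨_,h2,_⟩ <;> rw [h2] <;> norm_num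
  subst he1
  rw [he3] at hJ3 hR₀
  clear he3 hε
  have hε₂0 : ε₂ ≠ 0 := by intro h; rw [h] at he2; norm_num at he2
  -- skew in convenient form
  have sk1 : ∀ u v : V, g u (J₁ v) = -g (J₁ u) v := fun u v => by have := hskew1 u v; linarith
  have sk2 : ∀ u v : V, g u (J₂ v) = -g (J₂ u) v := fun u v => by have := hskew2 u v; linarith
  have sk3 : ∀ u v : V, g u (J₃ v) = -g (J₃ u) v := fun u v => by have := hskew3 u v; linarith
  -- composition lemmas
  have c13 : ∀ x : V, J₁ (J₃ x) = -(J₂ x) := by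
    intro x; rw [← hJ12 x, hJ1]; simp
  have ckey : ∀ x : V, J₂ (J₁ (J₂ x)) = (-ε₂) • J₁ x := by
    intro x
    have h1 : J₁ (J₁ (J₂ (J₁ (J₂ x)))) = (-1:ℝ) • (J₂ (J₁ (J₂ x))) := hJ1 _
    have h2 : J₁ (J₂ (J₁ (J₂ x))) = ε₂ • x := by rw [hJ12, hJ12]; exact hJ3 x
    rw [h2, map_smul] at h1
    -- h1 : ε₂ • J₁ x = (-1:ℝ) • J₂ (J₁ (J₂ x))
    have := congrArg (fun z => (-1:ℝ) • z) h1
    simp only [smul_smul] at this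
    rw [show (-1:ℝ)*(-1:ℝ) = 1 by norm_num, one_smul] at this
    rw [← this]; module
  have c21 : ∀ x : V, J₂ (J₁ x) = -(J₃ x) := by
    intro x
    have h := ckey (J₂ x)
    rw [hJ2, map_smul, map_smul] at h
    -- h : ε₂ • J₂ (J₁ x) = (-ε₂) • J₁ (J₂ x)
    rw [hJ12] at h
    have := congrArg (fun z => ε₂ • z) h
    simp only [smul_smul, he2, one_smul] at this
    rw [this]
    have : ε₂ * -ε₂ = -1 := by nlinarith [he2]
    rw [this]; module
  have c23 : ∀ x : V, J₂ (J₃ x) = (-ε₂) • J₁ x := by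
    intro x; rw [← hJ12 x]; exact ckey x
  have c31 : ∀ x : V, J₃ (J₁ x) = J₂ x := by
    intro x
    rw [← hJ12 (J₁ x), c21, map_neg, c13, neg_neg]
  have c32 : ∀ x : V, J₃ (J₂ x) = ε₂ • J₁ x := by
    intro x; rw [← hJ12 (J₂ x), hJ2, map_smul]
  -- orthogonality of the four vectors
  have gz1 : g ξ (J₁ ξ) = 0 := by have h := hskew1 ξ ξ; have h2 := hsymm (J₁ ξ) ξ; linarith
  have gz2 : g ξ (J₂ ξ) = 0 := by have h := hskew2 ξ ξ; have h2 := hsymm (J₂ ξ) ξ; linarith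
  have gz3 : g ξ (J₃ ξ) = 0 := by have h := hskew3 ξ ξ; have h2 := hsymm (J₃ ξ) ξ; linarith
  have gn1 : g (J₁ ξ) ξ = 0 := by rw [hsymm]; exact gz1
  have gn2 : g (J₂ ξ) ξ = 0 := by rw [hsymm]; exact gz2
  have gn3 : g (J₃ ξ) ξ = 0 := by rw [hsymm]; exact gz3
  have g11 : g (J₁ ξ) (J₁ ξ) = 0 := by rw [sk1, hJ1]; simp [hnull]
  have g12 : g (J₁ ξ) (J₂ ξ) = 0 := by rw [sk2, c21]; simp [gn3]
  have g13 : g (J₁ ξ) (J₃ ξ) = 0 := by rw [sk3, c31]; simp [gn2]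
  have g21 : g (J₂ ξ) (J₁ ξ) = 0 := by rw [sk1, hJ12]; simp [gn3]
  have g22 : g (J₂ ξ) (J₂ ξ) = 0 := by rw [sk2, hJ2]; simp [hnull]
  have g23 : g (J₂ ξ) (J₃ ξ) = 0 := by rw [sk3, c32]; simp [gn1]
  have g31 : g (J₃ ξ) (J₁ ξ) = 0 := by rw [sk1, c13]; simp [gn2]
  have g32 : g (J₃ ξ) (J₂ ξ) = 0 := by rw [sk2, c23]; simp [gn1]
  have g33 : g (J₃ ξ) (J₃ ξ) = 0 := by rw [sk3, hJ3]; simp [hnull]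
  have hnd' : ∀ v : V, (∀ x : V, g x v = 0) → v = 0 :=
    fun v h => hnd v (fun y => (hsymm v y).trans (h y))
  -- independence of ξ and J₁ ξ
  have indep : ∀ c d : ℝ, c • J₁ ξ + d • ξ = 0 → c = 0 := by
    intro c d h
    have h2 := congrArg J₁ h
    simp only [map_add, map_smul, hJ1, map_zero] at h2
    -- h2 : c • ((-1:ℝ) • ξ) + d • J₁ ξ = 0
    have key : (c*c + d*d) • ξ = d • (c • J₁ ξ + d • ξ) - c • (c • ((-1:ℝ) • ξ) + d • J₁ ξ) := by
      module
    rw [h, h2, smul_zero, smul_zero, sub_zero] at key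
    have hc := smul_eq_zero.mp key
    rcases hc with hc | hc
    · nlinarith [sq_nonneg c, sq_nonneg d]
    · exact absurd hc hξ
  have sA : ∀ X Y : V, ν * (g (J₁ X) ξ * g Y ξ - g X ξ * g (J₁ Y) ξ
      + ε₂ * (g (J₂ X) ξ * g (J₃ Y) ξ) - ε₂ * (g (J₃ X) ξ * g (J₂ Y) ξ)) = 0 := by
    intro X Y
    obtain ⟨a,b,c,d,h⟩ := hspan X Y
    have h1 := h (J₁ ξ)
    rw [hR₀] at h1
    simp only [map_add, map_smul, LinearMap.add_apply, LinearMap.smul_apply, smul_eq_mul,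
      sk1, sk2, sk3, hJ1, hJ2, hJ3, hJ12, c13, c21, c23, c31, c32,
      map_neg, LinearMap.neg_apply, neg_neg, hnull, gz1, gz2, gz3, gn1, gn2, gn3,
      g11,g12,g13,g21,g22,g23,g31,g32,g33,
      mul_zero, zero_mul, add_zero, zero_add, mul_neg, neg_zero, mul_one, sub_zero, neg_mul] at h1
    linear_combination h1 / 2
  have sB : ∀ X Y : V, ν * (g (J₂ X) ξ * g Y ξ - g X ξ * g (J₂ Y) ξ
      + g (J₁ X) ξ * g (J₃ Y) ξ - g (J₃ X) ξ * g (J₁ Y) ξ) = 0 := by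
    intro X Y
    obtain ⟨a,b,c,d,h⟩ := hspan X Y
    have h1 := h (J₂ ξ)
    rw [hR₀] at h1
    simp only [map_add, map_smul, LinearMap.add_apply, LinearMap.smul_apply, smul_eq_mul,
      sk1, sk2, sk3, hJ1, hJ2, hJ3, hJ12, c13, c21, c23, c31, c32,
      map_neg, LinearMap.neg_apply, neg_neg, hnull, gz1, gz2, gz3, gn1, gn2, gn3,
      g11,g12,g13,g21,g22,g23,g31,g32,g33,
      mul_zero, zero_mul, add_zero, zero_add, mul_neg, neg_zero, mul_one, sub_zero, neg_mul] at h1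
    linear_combination h1 / 2 - (ν * (g (J₂ X) ξ * g Y ξ - g X ξ * g (J₂ Y) ξ
      + g (J₁ X) ξ * g (J₃ Y) ξ - g (J₃ X) ξ * g (J₁ Y) ξ) / 2) * he2
  have sC : ∀ X Y : V, ν * (g (J₃ X) ξ * g Y ξ - g X ξ * g (J₃ Y) ξ
      - g (J₁ X) ξ * g (J₂ Y) ξ + g (J₂ X) ξ * g (J₁ Y) ξ) = 0 := by
    intro X Y
    obtain ⟨a,b,c,d,h⟩ := hspan X Y
    have h1 := h (J₃ ξ)
    rw [hR₀] at h1
    simp only [map_add, map_smul, LinearMap.add_apply, LinearMap.smul_apply, smul_eq_mul,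
      sk1, sk2, sk3, hJ1, hJ2, hJ3, hJ12, c13, c21, c23, c31, c32,
      map_neg, LinearMap.neg_apply, neg_neg, hnull, gz1, gz2, gz3, gn1, gn2, gn3,
      g11,g12,g13,g21,g22,g23,g31,g32,g33,
      mul_zero, zero_mul, add_zero, zero_add, mul_neg, neg_zero, mul_one, sub_zero, neg_mul] at h1
    linear_combination h1 / 2 - (ν * (g (J₃ X) ξ * g Y ξ - g X ξ * g (J₃ Y) ξ
      - g (J₁ X) ξ * g (J₂ Y) ξ + g (J₂ X) ξ * g (J₁ Y) ξ) / 2) * he2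
  have div : ∀ t : ℝ, ν * t = 0 → t = 0 := by
    intro t ht; rcases mul_eq_zero.mp ht with h|h
    · exact absurd h hν
    · exact h
  have vA : ∀ Y : V, (g (J₁ Y) ξ) • ξ + (g Y ξ) • J₁ ξ
      + (ε₂ * g (J₃ Y) ξ) • J₂ ξ - (ε₂ * g (J₂ Y) ξ) • J₃ ξ = 0 := by
    intro Y
    apply hnd'
    intro X
    simp only [map_add, map_sub, map_smul, smul_eq_mul, sk1, sk2, sk3]
    linear_combination -(div _ (sA X Y))
  have vB : ∀ Y : V, (g (J₂ Y) ξ) • ξ + (g (J₃ Y) ξ) • J₁ ξ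
      + (g Y ξ) • J₂ ξ - (g (J₁ Y) ξ) • J₃ ξ = 0 := by
    intro Y
    apply hnd'
    intro X
    simp only [map_add, map_sub, map_smul, smul_eq_mul, sk1, sk2, sk3]
    linear_combination -(div _ (sB X Y))
  have vC : ∀ Y : V, (g (J₃ Y) ξ) • ξ - (g (J₂ Y) ξ) • J₁ ξ
      + (g (J₁ Y) ξ) • J₂ ξ + (g Y ξ) • J₃ ξ = 0 := by
    intro Y
    apply hnd'
    intro X
    simp only [map_add, map_sub, map_smul, smul_eq_mul, sk1, sk2, sk3]
    linear_combination -(div _ (sC X Y))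
  -- dichotomy
  have dich : ∀ Y : V, g Y ξ ≠ 0 →
      (g Y ξ)^2 + (g (J₁ Y) ξ)^2 - ε₂*((g (J₂ Y) ξ)^2 + (g (J₃ Y) ξ)^2) = 0 := by
    intro Y hY
    by_contra hNne
    have master : ((g Y ξ)^2 + (g (J₁ Y) ξ)^2 - ε₂*((g (J₂ Y) ξ)^2 + (g (J₃ Y) ξ)^2)) •
        ((g Y ξ) • J₁ ξ + (g (J₁ Y) ξ) • ξ) = 0 := by
      linear_combination (norm := module)
        ((g Y ξ)^2 + (g (J₁ Y) ξ)^2) • vA Y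
        + (-(ε₂*(g Y ξ * g (J₃ Y) ξ + g (J₁ Y) ξ * g (J₂ Y) ξ))) • vB Y
        + (ε₂*(g Y ξ * g (J₂ Y) ξ - g (J₁ Y) ξ * g (J₃ Y) ξ)) • vC Y
    rcases smul_eq_zero.mp master with h|h
    · exact hNne h
    · exact hY (indep _ _ h)
  -- isotropy of the kernel
  have eGen : ∀ X W : V, g X ξ = 0 → g (J₁ X) ξ = 0 → g (J₂ X) ξ = 0 → g (J₃ X) ξ = 0 →
      g ξ W = 0 → g (J₁ ξ) W = 0 → g (J₂ ξ) W = 0 → g (J₃ ξ) W = 0 →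
      (ν * g X W) • ξ - (ν * g (J₁ X) W) • J₁ ξ + (ε₂ * (ν * g (J₂ X) W)) • J₂ ξ
        + (ε₂ * (ν * g (J₃ X) W)) • J₃ ξ = 0 := by
    intro X W hX0 hX1 hX2 hX3 hW0 hW1 hW2 hW3
    apply hnd'
    intro Y
    obtain ⟨a,b,c,d,h⟩ := hspan X Y
    have h1 := h W
    rw [hR₀] at h1
    simp only [map_add, map_smul, LinearMap.add_apply, LinearMap.smul_apply, smul_eq_mul,
      sk1, sk2, sk3, hX0, hX1, hX2, hX3, hW0, hW1, hW2, hW3,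
      hJ1, hJ2, hJ3, hJ12, c13, c21, c23, c31, c32,
      map_neg, LinearMap.neg_apply, neg_neg,
      mul_zero, zero_mul, add_zero, zero_add, mul_neg, neg_zero, mul_one, sub_zero, neg_mul,
      zero_sub, neg_eq_zero] at h1
    simp only [map_add, map_sub, map_smul, smul_eq_mul, sk1, sk2, sk3]
    linear_combination -h1
  have hiso : ∀ X W : V, g X ξ = 0 → g (J₁ X) ξ = 0 → g (J₂ X) ξ = 0 → g (J₃ X) ξ = 0 →
      g W ξ = 0 → g (J₁ W) ξ = 0 → g (J₂ W) ξ = 0 → g (J₃ W) ξ = 0 → g X W = 0 := by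
    intro X W hx0 hx1 hx2 hx3 hw0 hw1 hw2 hw3
    have w0 : g ξ W = 0 := by rw [hsymm]; exact hw0
    have w1 : g (J₁ ξ) W = 0 := by rw [hsymm, sk1, hw1, neg_zero]
    have w2 : g (J₂ ξ) W = 0 := by rw [hsymm, sk2, hw2, neg_zero]
    have w3 : g (J₃ ξ) W = 0 := by rw [hsymm, sk3, hw3, neg_zero]
    have w0' : g ξ (J₁ W) = 0 := by rw [sk1, w1, neg_zero]
    have w1' : g (J₁ ξ) (J₁ W) = 0 := by rw [sk1, hJ1]; simp [map_smul, w0]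
    have w2' : g (J₂ ξ) (J₁ W) = 0 := by rw [sk1, hJ12, w3, neg_zero]
    have w3' : g (J₃ ξ) (J₁ W) = 0 := by rw [sk1, c13]; simp [w2]
    have x1' : g (J₁ (J₁ X)) ξ = 0 := by rw [hJ1]; simp [hx0]
    have x2' : g (J₂ (J₁ X)) ξ = 0 := by rw [c21]; simp [hx3]
    have x3' : g (J₃ (J₁ X)) ξ = 0 := by rw [c31]; exact hx2
    have ea := eGen (J₁ X) W hx1 x1' x2' x3' w0 w1 w2 w3
    have eb := eGen X (J₁ W) hx0 hx1 hx2 hx3 w0' w1' w2' w3'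
    simp only [hJ1, c21, c31, c13, map_smul, map_neg, LinearMap.smul_apply, LinearMap.neg_apply,
      smul_eq_mul, sk1, hJ12, neg_neg, mul_neg, neg_smul, neg_mul] at ea eb
    have key : (ν * g X W) • J₁ ξ + (ν * g (J₁ X) W) • ξ = 0 := by
      linear_combination (norm := module) ((2:ℝ)⁻¹) • ea - ((2:ℝ)⁻¹) • eb
    exact div _ (indep _ _ key)
  -- the kernel submodule
  set M : Fin 4 → V := ![ξ, J₁ ξ, J₂ ξ, J₃ ξ] with hM
  set φ : V →ₗ[ℝ] (Fin 4 → ℝ) := LinearMap.pi (fun i => g.flip (M i)) with hφ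
  have memker : ∀ x : V, x ∈ LinearMap.ker φ ↔
      (g x ξ = 0 ∧ g x (J₁ ξ) = 0 ∧ g x (J₂ ξ) = 0 ∧ g x (J₃ ξ) = 0) := by
    intro x
    simp only [hφ, LinearMap.mem_ker, LinearMap.pi_apply, funext_iff, Fin.forall_fin_succ,
      LinearMap.flip_apply, hM, Pi.zero_apply]
    simp [Fin.forall_fin_succ, hsymm]
  have conv1 : ∀ x : V, g x (J₁ ξ) = 0 → g (J₁ x) ξ = 0 := fun x h => by
    have := hskew1 x ξ; linarith
  have conv2 : ∀ x : V, g x (J₂ ξ) = 0 → g (J₂ x) ξ = 0 := fun x h => by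
    have := hskew2 x ξ; linarith
  have conv3 : ∀ x : V, g x (J₃ ξ) = 0 → g (J₃ x) ξ = 0 := fun x h => by
    have := hskew3 x ξ; linarith
  have hker_le : LinearMap.ker φ ≤ g.orthogonal (LinearMap.ker φ) := by
    intro w hw
    rw [LinearMap.BilinForm.mem_orthogonal_iff]
    intro x hx
    obtain ⟨a0,a1,a2,a3⟩ := (memker x).mp hx
    obtain ⟨b0,b1,b2,b3⟩ := (memker w).mp hw
    exact LinearMap.BilinForm.isOrtho_def.mpr
      (hiso x w a0 (conv1 x a1) (conv2 x a2) (conv3 x a3)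
        b0 (conv1 w b1) (conv2 w b2) (conv3 w b3))
  have hrefl : g.IsRefl := fun x y h => by rw [hsymm]; exact h
  have hndeg : g.Nondegenerate := ⟨hnd, hnd'⟩
  have horth := LinearMap.BilinForm.finrank_orthogonal hndeg (LinearMap.ker φ)
  have hmono : Module.finrank ℝ (LinearMap.ker φ)
      ≤ Module.finrank ℝ (g.orthogonal (LinearMap.ker φ)) := Submodule.finrank_mono hker_le
  have hrn := LinearMap.finrank_range_add_finrank_ker φ
  have hfin4 : Module.finrank ℝ (Fin 4 → ℝ) = 4 := by simp
  have hle4 : Module.finrank ℝ (LinearMap.range φ) ≤ 4 := by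
    have := Submodule.finrank_le (LinearMap.range φ)
    omega
  have hrange4 : Module.finrank ℝ (LinearMap.range φ) = 4 := by
    rw [hdim] at hrn horth
    omega
  have hrange_top : LinearMap.range φ = ⊤ := Submodule.eq_top_of_finrank_eq (by omega)
  obtain ⟨Y, hY⟩ := LinearMap.range_eq_top.mp hrange_top (Pi.single (0 : Fin 4) (1:ℝ))
  have h0 := congrFun hY 0
  have h1 := congrFun hY 1
  have h2 := congrFun hY 2
  have h3 := congrFun hY 3
  simp [hφ, hM, LinearMap.pi_apply, Pi.single_eq_same, Pi.single_eq_of_ne] at h0 h1 h2 h3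
  -- h0 : g Y ξ = 1, h1.. : g Y (Jᵢ ξ) = 0
  have hy0 : g Y ξ ≠ 0 := by rw [h0]; exact one_ne_zero
  have hD := dich Y hy0
  rw [h0, conv1 Y h1, conv2 Y h2, conv3 Y h3] at hD
  norm_num at hD
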